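/- There exist 15 pointwise orthonormal tangent vector fields on the sphere S^127; that is, there exist continuous maps V_1, …, V_15 from the unit sphere S^127 of EuclideanSpace ℝ (Fin 128) to EuclideanSpace ℝ (Fin 128) such that for every p ∈ S^127 and all i, j ∈ {1, …, 15}: ⟨V_i(p), p⟩ = 0, and ⟨V_i(p), V_j(p)⟩ = 1 if i = j and 0 if i ≠ j. -/

import Mathlib

open scoped RealInnerProductSpace

/-! Auxiliary construction: 15 anticommuting, antisymmetric, orthogonal signed-permutation
complex structures on `ℝ¹²⁸`, indexed by bit vectors in `(ZMod 2)⁷`. -/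

abbrev G := Fin 7 → ZMod 2

def aVec : Fin 15 → G :=
  ![![0, 1, 0, 0, 1, 0, 0],
    ![1, 1, 0, 0, 0, 1, 0],
    ![1, 1, 1, 0, 1, 1, 0],
    ![1, 1, 1, 0, 1, 1, 1],
    ![0, 0, 0, 0, 0, 0, 1],
    ![0, 1, 0, 0, 0, 0, 1],
    ![0, 0, 1, 1, 1, 1, 0],
    ![1, 1, 0, 1, 0, 0, 0],
    ![1, 0, 1, 0, 0, 1, 0],
    ![0, 0, 1, 0, 1, 0, 0],
    ![1, 0, 1, 0, 1, 1, 1],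
    ![1, 0, 0, 0, 0, 0, 0],
    ![1, 0, 0, 1, 1, 1, 0],
    ![0, 1, 1, 0, 1, 1, 0],
    ![0, 1, 1, 1, 0, 0, 0]]

def cVec : Fin 15 → G :=
  ![![0, 0, 0, 1, 1, 0, 0],
    ![1, 0, 0, 0, 1, 0, 0],
    ![0, 0, 0, 1, 0, 1, 0],
    ![1, 0, 1, 1, 0, 0, 1],
    ![0, 1, 0, 1, 0, 0, 1],
    ![0, 0, 1, 1, 1, 1, 1],
    ![0, 1, 1, 1, 0, 1, 0],
    ![1, 1, 1, 1, 1, 0, 1],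
    ![1, 0, 1, 0, 1, 1, 1],
    ![0, 0, 1, 1, 0, 0, 1],
    ![1, 1, 0, 1, 1, 1, 0],
    ![1, 0, 0, 1, 1, 1, 1],
    ![1, 0, 1, 1, 1, 0, 0],
    ![1, 0, 0, 1, 0, 1, 0],
    ![0, 0, 1, 0, 0, 1, 1]]

def dotG (a v : G) : ZMod 2 := ∑ k, a k * v k

lemma dotG_add_right (a v w : G) : dotG a (v + w) = dotG a v + dotG a w := by
  simp [dotG, mul_add, Finset.sum_add_distrib]

lemma dotG_add_left (a b v : G) : dotG (a + b) v = dotG a v + dotG b v := by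
  simp [dotG, add_mul, Finset.sum_add_distrib]

lemma key_diag : ∀ i : Fin 15, dotG (aVec i) (cVec i) = 1 := by decide

lemma key_off : ∀ i j : Fin 15, i ≠ j →
    dotG (aVec i + aVec j) (cVec i + cVec j) = 1 := by decide

noncomputable def sgn (a v : G) : ℝ := if dotG a v = 0 then 1 else -1

lemma sgn_mul_self (a v : G) : sgn a v * sgn a v = 1 := by
  unfold sgn; split <;> norm_num

lemma zmod2_cases : ∀ x : ZMod 2, x = 0 ∨ x = 1 := by decide

lemma sgn_add (a v w : G) : sgn a (v + w) = sgn a v * sgn a w := by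
  unfold sgn
  rw [dotG_add_right]
  rcases zmod2_cases (dotG a v) with hv | hv <;>
    rcases zmod2_cases (dotG a w) with hw | hw <;>
      simp [hv, hw, show (1 : ZMod 2) + 1 = 0 from rfl, show (1 : ZMod 2) ≠ 0 from by decide,
        show (0 : ZMod 2) + 1 = 1 from rfl, show (1 : ZMod 2) + 0 = 1 from rfl]

lemma sgn_of_dot_one (a v : G) (h : dotG a v = 1) : sgn a v = -1 := by
  simp [sgn, h, show (1 : ZMod 2) ≠ 0 from by decide]

lemma zmod2_add_add_self (x y : ZMod 2) : x + y + y = x := by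
  rcases zmod2_cases x with hx | hx <;> rcases zmod2_cases y with hy | hy <;>
    simp [hx, hy, show (1 : ZMod 2) + 1 = 0 from rfl]

lemma add_add_self (v w : G) : v + w + w = v := by
  funext k
  simp only [Pi.add_apply]
  exact zmod2_add_add_self _ _

lemma add_pair_left (v w u : G) : v + (w + u) + w = v + u := by
  funext k
  simp only [Pi.add_apply]
  rcases zmod2_cases (w k) with h | h <;> rcases zmod2_cases (v k) with h' | h' <;>
    rcases zmod2_cases (u k) with h'' | h'' <;>
      simp [h, h', h'', show (1 : ZMod 2) + 1 = 0 from rfl]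

lemma add_pair_right (v w u : G) : v + (w + u) + u = v + w := by
  rw [show w + u = u + w from add_comm w u]
  exact add_pair_left v u w

/-- A function whose values flip sign under translation by `d` sums to zero. -/
lemma sum_eq_zero_of_flip (f : G → ℝ) (d : G) (h : ∀ v, f (v + d) = - f v) :
    ∑ v : G, f v = 0 := by
  have h1 : ∑ v : G, f ((Equiv.addRight d) v) = ∑ v : G, f v := Equiv.sum_comp _ f
  simp only [Equiv.coe_addRight] at h1
  have h2 : ∑ v : G, f (v + d) = - ∑ v : G, f v := by
    rw [← Finset.sum_neg_distrib]
    exact Finset.sum_congr rfl fun v _ => h v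
  rw [h2] at h1
  linarith

lemma cardG : Fintype.card G = 128 := by simp

noncomputable def eG : G ≃ Fin 128 := Fintype.equivFinOfCardEq cardG

noncomputable def VL (i : Fin 15) :
    EuclideanSpace ℝ (Fin 128) →ₗ[ℝ] EuclideanSpace ℝ (Fin 128) where
  toFun p := WithLp.toLp 2 (fun k => sgn (aVec i) (eG.symm k) * p (eG (eG.symm k + cVec i)))
  map_add' p q := by
    ext k
    simp only [PiLp.add_apply, PiLp.toLp_apply]
    ring
  map_smul' r p := by
    ext k
    simp only [PiLp.smul_apply, smul_eq_mul, RingHom.id_apply, PiLp.toLp_apply]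
    ring

lemma VL_apply (i : Fin 15) (p : EuclideanSpace ℝ (Fin 128)) (k : Fin 128) :
    VL i p k = sgn (aVec i) (eG.symm k) * p (eG (eG.symm k + cVec i)) := rfl

theorem exists_fifteen_orthonormal_tangent_fields_on_S127 :
    ∃ V : Fin 15 →
        (Metric.sphere (0 : EuclideanSpace ℝ (Fin 128)) 1 → EuclideanSpace ℝ (Fin 128)),
      (∀ i, Continuous (V i)) ∧
      (∀ i, ∀ p : Metric.sphere (0 : EuclideanSpace ℝ (Fin 128)) 1,
        ⟪V i p, (p : EuclideanSpace ℝ (Fin 128))⟫ = 0) ∧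
      (∀ i j, ∀ p : Metric.sphere (0 : EuclideanSpace ℝ (Fin 128)) 1,
        ⟪V i p, V j p⟫ = if i = j then 1 else 0) := by
  refine ⟨fun i p => VL i (p : EuclideanSpace ℝ (Fin 128)), ?_, ?_, ?_⟩
  · intro i
    exact ((VL i).continuous_of_finiteDimensional).comp continuous_subtype_val
  · intro i p
    set q : EuclideanSpace ℝ (Fin 128) := (p : EuclideanSpace ℝ (Fin 128))
    have hinner : ⟪VL i q, q⟫ = ∑ v : G,
        sgn (aVec i) v * q (eG (v + cVec i)) * q (eG v) := by
      rw [PiLp.inner_apply]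
      have hcomp : ∀ v : G, sgn (aVec i) v * q (eG (v + cVec i)) * q (eG v) =
          ⟪VL i q (eG v), q (eG v)⟫ := by
        intro v
        simp only [VL_apply, RCLike.inner_apply, conj_trivial, Equiv.symm_apply_apply]
        ring
      exact (Fintype.sum_equiv eG _ _ hcomp).symm
    rw [hinner]
    apply sum_eq_zero_of_flip _ (cVec i)
    intro v
    rw [add_add_self, sgn_add, sgn_of_dot_one _ _ (key_diag i)]
    ring
  · intro i j p
    set q : EuclideanSpace ℝ (Fin 128) := (p : EuclideanSpace ℝ (Fin 128))
    have hq : ‖q‖ = 1 := by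
      have h := p.2
      rw [mem_sphere_iff_norm, sub_zero] at h
      exact h
    have hinner : ⟪VL i q, VL j q⟫ = ∑ v : G,
        sgn (aVec i) v * q (eG (v + cVec i)) * (sgn (aVec j) v * q (eG (v + cVec j))) := by
      rw [PiLp.inner_apply]
      have hcomp : ∀ v : G, sgn (aVec i) v * q (eG (v + cVec i)) *
          (sgn (aVec j) v * q (eG (v + cVec j))) =
          ⟪VL i q (eG v), VL j q (eG v)⟫ := by
        intro v
        simp only [VL_apply, RCLike.inner_apply, conj_trivial, Equiv.symm_apply_apply]
        ring
      exact (Fintype.sum_equiv eG _ _ hcomp).symm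
    rw [hinner]
    by_cases hij : i = j
    · subst hij
      rw [if_pos rfl]
      have step1 : ∀ v : G, sgn (aVec i) v * q (eG (v + cVec i)) *
          (sgn (aVec i) v * q (eG (v + cVec i))) = q (eG (v + cVec i)) ^ 2 := fun v => by
        linear_combination q (eG (v + cVec i)) ^ 2 * sgn_mul_self (aVec i) v
      rw [Finset.sum_congr rfl fun v _ => step1 v]
      have step2 : ∑ v : G, q (eG (v + cVec i)) ^ 2 = ∑ v : G, q (eG v) ^ 2 :=
        Fintype.sum_equiv (Equiv.addRight (cVec i))
          (fun v => q (eG (v + cVec i)) ^ 2) (fun v => q (eG v) ^ 2) (fun v => rfl)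
      have step3 : ∑ v : G, q (eG v) ^ 2 = ∑ k : Fin 128, q k ^ 2 :=
        Fintype.sum_equiv eG (fun v => q (eG v) ^ 2) (fun k => q k ^ 2) (fun v => rfl)
      rw [step2, step3]
      have hn : ⟪q, q⟫ = 1 := by
        rw [real_inner_self_eq_norm_sq, hq]; norm_num
      rw [PiLp.inner_apply] at hn
      simpa [RCLike.inner_apply, sq] using hn
    · rw [if_neg hij]
      obtain ⟨d, hdd⟩ : ∃ d, cVec i + cVec j = d := ⟨_, rfl⟩
      have hd : sgn (aVec i) d * sgn (aVec j) d = -1 := by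
        have hk := key_off i j hij
        rw [dotG_add_left, hdd] at hk
        unfold sgn
        rcases zmod2_cases (dotG (aVec i) d) with hx | hx <;>
          rcases zmod2_cases (dotG (aVec j) d) with hy | hy <;>
            simp [hx, hy, show (1 : ZMod 2) ≠ 0 from by decide] <;>
              simp [hx, hy, show (0 : ZMod 2) + 0 ≠ 1 from by decide,
                show (1 : ZMod 2) + 1 ≠ 1 from by decide] at hk
      apply sum_eq_zero_of_flip _ d
      intro v
      have h1 : v + d + cVec i = v + cVec j := by rw [← hdd]; exact add_pair_left v _ _
      have h2 : v + d + cVec j = v + cVec i := by rw [← hdd]; exact add_pair_right v _ _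
      rw [h1, h2, sgn_add, sgn_add]
      linear_combination (sgn (aVec i) v * sgn (aVec j) v * q (eG (v + cVec j)) *
        q (eG (v + cVec i))) * hd
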